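/- Define the deconcatenation coproduct Δ_↗ on the span of planar forests by Δ_↗(F) = Σ_{F_1 F_2 = F} F_1 ⊗ F_2 (sum over all, possibly empty, factorizations of the forest F as a concatenation). Then Δ_↗ is dual to the product ↗ under the pairing ⟨−,−⟩: ⟨Δ_↗(x), y⊗z⟩ = ⟨x, z ↗ y⟩ for all x, y, z. In particular every planar tree is primitive for Δ_↗. -/

import Mathlib

open scoped TensorProduct

/-- Planar rooted trees; `PTree.node []` is the single-vertex tree `•`. -/
inductive PTree : Type
  | node : List PTree → PTree

/-- Planar rooted forests. -/
abbrev Forest : Type := List PTree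

instance : Monoid Forest where
  mul := fun x y => List.append x y
  one := ([] : List PTree)
  mul_assoc := List.append_assoc
  one_mul := fun _ => rfl
  mul_one := List.append_nil

/-- The infinitesimal Hopf algebra `H` of planar rooted forests. -/
abbrev H : Type := MonoidAlgebra ℚ Forest

/-- The basis element of `H` indexed by a forest. -/
noncomputable def bf (F : Forest) : H := MonoidAlgebra.of ℚ Forest F

/-- The operator `B⁺` grafting a forest on a common new root, extended linearly. -/
noncomputable def Bplus : H →ₗ[ℚ] H :=
  (Finsupp.lift H ℚ Forest fun F => bf [PTree.node F]) ∘ₗ (MonoidAlgebra.coeffLinearEquiv ℚ).toLinearMap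

/-- The map `γ`: `t_1…t_n ↦ δ_{t_1,•} t_2…t_n`, extended linearly. -/
noncomputable def gammaH : H →ₗ[ℚ] H :=
  (Finsupp.lift H ℚ Forest fun F =>
    match F with
    | PTree.node [] :: rest => bf rest
    | _ => 0) ∘ₗ (MonoidAlgebra.coeffLinearEquiv ℚ).toLinearMap

/-- Grafting on the left leaf: `F ↗ G` grafts `F` on the leftmost leaf of `G`. -/
def graftLeaf (F : Forest) : Forest → Forest
  | [] => F
  | .node c :: rest => .node (graftLeaf F c) :: rest

/-- The product `↗` extended bilinearly to `H`. -/
noncomputable def glH : H →ₗ[ℚ] H →ₗ[ℚ] H :=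
  (Finsupp.lift (H →ₗ[ℚ] H) ℚ Forest fun F =>
    (Finsupp.lift H ℚ Forest fun G => bf (graftLeaf F G)) ∘ₗ (MonoidAlgebra.coeffLinearEquiv ℚ).toLinearMap) ∘ₗ (MonoidAlgebra.coeffLinearEquiv ℚ).toLinearMap

/-- The deconcatenation coproduct `Δ_↗(F) = Σ_{F_1·F_2 = F} F_1 ⊗ F_2`, the sum running
over all (possibly empty) factorizations of the forest `F` as a concatenation. -/
noncomputable def Δd : H →ₗ[ℚ] H ⊗[ℚ] H :=
  (Finsupp.lift (H ⊗[ℚ] H) ℚ Forest fun F =>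
    ∑ k ∈ Finset.range (F.length + 1), bf (F.take k) ⊗ₜ bf (F.drop k)) ∘ₗ (MonoidAlgebra.coeffLinearEquiv ℚ).toLinearMap

lemma lift_bf {M : Type*} [AddCommMonoid M] [Module ℚ M] (f : Forest → M) (F : Forest) :
    ((Finsupp.lift M ℚ Forest f) ∘ₗ (MonoidAlgebra.coeffLinearEquiv ℚ).toLinearMap) (bf F) = f F := by
  show (Finsupp.lift M ℚ Forest f) (Finsupp.single F 1) = f F
  simp [Finsupp.lift_apply, Finsupp.sum_single_index]

lemma bf_one : bf ([] : Forest) = 1 := rfl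

lemma bf_mul (F G : Forest) : bf F * bf G = bf (F ++ G) := by
  show bf F * bf G = bf (F * G)
  exact ((MonoidAlgebra.of ℚ Forest).map_mul F G).symm

lemma Bplus_bf (F : Forest) : Bplus (bf F) = bf [PTree.node F] := lift_bf _ F

lemma gammaH_bf_cons (rest : Forest) : gammaH (bf (PTree.node [] :: rest)) = bf rest :=
  lift_bf _ _

lemma gammaH_bf_cons' (d : PTree) (ds : Forest) (rest : Forest) :
    gammaH (bf (PTree.node (d :: ds) :: rest)) = 0 := lift_bf _ _

lemma gammaH_one : gammaH 1 = 0 := by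
  rw [← bf_one]; exact lift_bf _ _

noncomputable def εH : H →ₗ[ℚ] ℚ := Finsupp.lapply (1 : Forest) ∘ₗ (MonoidAlgebra.coeffLinearEquiv ℚ).toLinearMap

lemma εH_bf_nil : εH (bf ([] : Forest)) = 1 := by
  show (Finsupp.single ([] : Forest) (1 : ℚ)) (1 : Forest) = 1
  exact Finsupp.single_eq_same

lemma εH_bf_ne {F : Forest} (h : F ≠ []) : εH (bf F) = 0 := by
  show (Finsupp.single F (1 : ℚ)) (1 : Forest) = 0
  exact Finsupp.single_eq_of_ne' (by exact fun hh => h hh)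

lemma εH_one : εH (1 : H) = 1 := εH_bf_nil

lemma single_eq_smul_bf (F : Forest) (c : ℚ) : (MonoidAlgebra.single F c : H) = c • bf F := by
  rw [bf, MonoidAlgebra.of_apply, MonoidAlgebra.smul_single', mul_one]

lemma gammaH_bf_nil : gammaH (bf ([] : Forest)) = 0 := by rw [bf_one]; exact gammaH_one

lemma εH_mul (a b : H) : εH (a * b) = εH a * εH b := by
  induction a using MonoidAlgebra.induction_linear with
  | zero => simp
  | add f g hf hg => simp [add_mul, map_add, hf, hg]
  | single F c =>
    induction b using MonoidAlgebra.induction_linear with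
    | zero => simp
    | add f g hf hg => simp [mul_add, map_add, hf, hg]
    | single G d =>
      rw [single_eq_smul_bf, single_eq_smul_bf, smul_mul_assoc, mul_smul_comm, bf_mul]
      simp only [map_smul, smul_eq_mul]
      rcases F with _ | ⟨t, F'⟩
      · rw [List.nil_append, εH_bf_nil]; ring
      · rw [εH_bf_ne (List.cons_ne_nil t F'), εH_bf_ne (show (t :: F') ++ G ≠ [] by simp)]
        ring

lemma εH_Bplus (x : H) : εH (Bplus x) = 0 := by
  induction x using MonoidAlgebra.induction_linear with
  | zero => simp
  | add f g hf hg => simp [map_add, hf, hg]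
  | single F c =>
    rw [single_eq_smul_bf, map_smul, Bplus_bf, map_smul,
      εH_bf_ne (List.cons_ne_nil _ _), smul_zero]

lemma gammaH_Bplus (x : H) : gammaH (Bplus x) = εH x • 1 := by
  induction x using MonoidAlgebra.induction_linear with
  | zero => simp
  | add f g hf hg => simp [map_add, hf, hg, add_smul]
  | single F c =>
    simp only [single_eq_smul_bf, map_smul]
    rw [Bplus_bf]
    rcases F with _ | ⟨t, F'⟩
    · rw [show ([PTree.node []] : Forest) = PTree.node [] :: ([] : Forest) from rfl,
        gammaH_bf_cons, εH_bf_nil, bf_one]; simp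
    · rw [gammaH_bf_cons', εH_bf_ne (List.cons_ne_nil t F')]; simp

lemma gammaH_mul (a b : H) : gammaH (a * b) = gammaH a * b + εH a • gammaH b := by
  induction a using MonoidAlgebra.induction_linear with
  | zero => simp
  | add f g hf hg =>
    simp only [add_mul, map_add, hf, hg, add_smul]; abel
  | single F c =>
    induction b using MonoidAlgebra.induction_linear with
    | zero => simp
    | add f g hf hg =>
      simp only [mul_add, map_add, hf, hg, smul_add]; abel
    | single G d =>
      rw [single_eq_smul_bf, single_eq_smul_bf, smul_mul_assoc, mul_smul_comm, bf_mul]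
      simp only [map_smul, smul_mul_assoc, mul_smul_comm, smul_eq_mul, smul_smul]
      rcases F with _ | ⟨⟨C⟩, F'⟩
      · rw [List.nil_append, gammaH_bf_nil, εH_bf_nil]
        simp only [zero_mul, smul_zero, zero_add, mul_one]
      · have hne : εH (bf (PTree.node C :: F')) = 0 := εH_bf_ne (List.cons_ne_nil _ _)
        rw [hne, List.cons_append, mul_zero, zero_mul, zero_smul, add_zero]
        rcases C with _ | ⟨d, ds⟩
        · rw [gammaH_bf_cons, gammaH_bf_cons, bf_mul, mul_comm c d]
        · rw [gammaH_bf_cons', gammaH_bf_cons', smul_zero, zero_mul, smul_zero]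

lemma graftLeaf_nil (K : Forest) : graftLeaf K [] = K := by simp [graftLeaf]

lemma graftLeaf_cons (K : Forest) (c rest) :
    graftLeaf K (PTree.node c :: rest) = PTree.node (graftLeaf K c) :: rest := by
  simp [graftLeaf]

lemma glH_bf (K G : Forest) : glH (bf K) (bf G) = bf (graftLeaf K G) := by
  have h1 := lift_bf (M := H →ₗ[ℚ] H)
    (fun F => (Finsupp.lift H ℚ Forest fun G => bf (graftLeaf F G)) ∘ₗ (MonoidAlgebra.coeffLinearEquiv ℚ).toLinearMap) K
  rw [glH]
  exact (LinearMap.congr_fun h1 (bf G)).trans (lift_bf _ _)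

lemma glH_one (z : H) : glH z 1 = z := by
  induction z using MonoidAlgebra.induction_linear with
  | zero => simp
  | add f g hf hg => simp [map_add, hf, hg]
  | single K c =>
    rw [single_eq_smul_bf, map_smul, LinearMap.smul_apply, ← bf_one, glH_bf, graftLeaf_nil]

lemma glH_Bplus_mul (z w a : H) : glH z (Bplus w * a) = Bplus (glH z w) * a := by
  induction z using MonoidAlgebra.induction_linear with
  | zero => simp
  | add f g hf hg => simp [map_add, hf, hg, LinearMap.add_apply, add_mul]
  | single K c =>
    rw [single_eq_smul_bf]
    simp only [map_smul, LinearMap.smul_apply, smul_mul_assoc]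
    congr 1
    induction w using MonoidAlgebra.induction_linear with
    | zero => simp
    | add f g hf hg => simp [map_add, hf, hg, add_mul]
    | single D d =>
      rw [single_eq_smul_bf]
      simp only [map_smul, smul_mul_assoc]
      congr 1
      induction a using MonoidAlgebra.induction_linear with
      | zero => simp
      | add f g hf hg => simp [map_add, hf, hg, mul_add]
      | single A e =>
        rw [single_eq_smul_bf]
        simp only [map_smul, mul_smul_comm]
        congr 1
        rw [Bplus_bf, bf_mul, glH_bf, glH_bf, Bplus_bf, bf_mul]
        rw [show ([PTree.node D] : Forest) ++ A = PTree.node D :: A from rfl, graftLeaf_cons]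
        rfl

lemma εH_glH (z y : H) : εH (glH z y) = εH z * εH y := by
  induction z using MonoidAlgebra.induction_linear with
  | zero => simp
  | add f g hf hg => simp [map_add, hf, hg, LinearMap.add_apply, add_mul]
  | single K c =>
    induction y using MonoidAlgebra.induction_linear with
    | zero => simp
    | add f g hf hg => simp [map_add, hf, hg, mul_add]
    | single G d =>
      rw [single_eq_smul_bf, single_eq_smul_bf]
      simp only [map_smul, LinearMap.smul_apply, smul_eq_mul]
      rw [glH_bf]
      rcases G with _ | ⟨⟨c₀⟩, rest⟩
      · rw [graftLeaf_nil, εH_bf_nil]; ring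
      · rw [graftLeaf_cons, εH_bf_ne (List.cons_ne_nil _ _),
          εH_bf_ne (List.cons_ne_nil _ _)]
        ring

noncomputable def CE : H ⊗[ℚ] H →ₗ[ℚ] H :=
  TensorProduct.lift (((LinearMap.lsmul ℚ H).comp εH).flip)

lemma CE_tmul (a b : H) : CE (a ⊗ₜ[ℚ] b) = εH b • a := rfl

lemma CE_lmul_left (x : H) (u : H ⊗[ℚ] H) : CE ((x ⊗ₜ[ℚ] (1 : H)) * u) = x * CE u := by
  induction u using TensorProduct.induction_on with
  | zero => simp
  | tmul a b => rw [Algebra.TensorProduct.tmul_mul_tmul, one_mul, CE_tmul, CE_tmul,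
      mul_smul_comm]
  | add u v hu hv => rw [mul_add, map_add, hu, hv, map_add, mul_add]

lemma CE_lTB_rmul (U : H ⊗[ℚ] H) (v : H) :
    CE ((LinearMap.lTensor H Bplus U) * ((1 : H) ⊗ₜ[ℚ] v)) = 0 := by
  induction U using TensorProduct.induction_on with
  | zero => simp
  | tmul a b =>
    rw [LinearMap.lTensor_tmul, Algebra.TensorProduct.tmul_mul_tmul, mul_one, CE_tmul,
      εH_mul, εH_Bplus, zero_mul, zero_smul]
  | add u v hu hv => rw [map_add, add_mul, map_add, hu, hv, add_zero]

section DeltaLemmas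

variable (Δ : H →ₗ[ℚ] H ⊗[ℚ] H)
variable (hΔ1 : Δ 1 = 1 ⊗ₜ 1)
variable (hΔm : ∀ x y : H, Δ (x * y) = (x ⊗ₜ (1 : H)) * Δ y + Δ x * ((1 : H) ⊗ₜ y) - x ⊗ₜ y)
variable (hΔB : ∀ x : H, Δ (Bplus x) = (Bplus x) ⊗ₜ 1 + (LinearMap.lTensor H Bplus) (Δ x))

include hΔm hΔB in
lemma ΔBm (u v : H) :
    Δ (Bplus u * v) = ((Bplus u) ⊗ₜ (1 : H)) * Δ v
      + (LinearMap.lTensor H Bplus (Δ u)) * ((1 : H) ⊗ₜ v) := by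
  rw [hΔm, hΔB, add_mul, Algebra.TensorProduct.tmul_mul_tmul, one_mul, mul_one]
  abel

lemma bf_cons_eq (C : Forest) (A : Forest) :
    bf (PTree.node C :: A) = Bplus (bf C) * bf A := by
  rw [Bplus_bf, bf_mul]; rfl

include hΔ1 hΔm hΔB in
lemma counit : ∀ x : H, CE (Δ x) = x := by
  have key : ∀ F : Forest, CE (Δ (bf F)) = bf F := by
    intro F
    induction F with
    | nil => rw [bf_one, hΔ1, CE_tmul, εH_one, one_smul]
    | cons t F' ih =>
      obtain ⟨C⟩ := t
      rw [bf_cons_eq, ΔBm Δ hΔm hΔB, map_add, CE_lmul_left, ih, CE_lTB_rmul, add_zero]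
  intro x
  induction x using MonoidAlgebra.induction_linear with
  | zero => simp
  | add f g hf hg => simp [map_add, hf, hg]
  | single F c => rw [single_eq_smul_bf, map_smul, map_smul, key]

lemma GL1 (x : H) (u : H ⊗[ℚ] H) :
    LinearMap.lTensor H gammaH ((x ⊗ₜ (1 : H)) * u)
      = (x ⊗ₜ (1 : H)) * LinearMap.lTensor H gammaH u := by
  induction u using TensorProduct.induction_on with
  | zero => simp
  | tmul a b =>
    rw [Algebra.TensorProduct.tmul_mul_tmul, one_mul, LinearMap.lTensor_tmul,
      LinearMap.lTensor_tmul, Algebra.TensorProduct.tmul_mul_tmul, one_mul]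
  | add u v hu hv => rw [mul_add, map_add, hu, hv, map_add, mul_add]

lemma GL2 (U : H ⊗[ℚ] H) (v : H) :
    LinearMap.lTensor H gammaH ((LinearMap.lTensor H Bplus U) * ((1 : H) ⊗ₜ v))
      = CE U ⊗ₜ v := by
  induction U using TensorProduct.induction_on with
  | zero => simp
  | tmul a b =>
    rw [LinearMap.lTensor_tmul, Algebra.TensorProduct.tmul_mul_tmul, mul_one,
      LinearMap.lTensor_tmul, gammaH_mul, gammaH_Bplus, εH_Bplus, zero_smul, add_zero,
      smul_mul_assoc, one_mul, CE_tmul, TensorProduct.tmul_smul, TensorProduct.smul_tmul']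
  | add u w hu hw => rw [map_add, add_mul, map_add, hu, hw, map_add, TensorProduct.add_tmul]

include hΔ1 hΔm hΔB in
lemma L1 (u v : H) :
    LinearMap.lTensor H gammaH (Δ (Bplus u * v))
      = ((Bplus u) ⊗ₜ (1 : H)) * LinearMap.lTensor H gammaH (Δ v) + u ⊗ₜ v := by
  rw [ΔBm Δ hΔm hΔB, map_add, GL1, GL2, counit Δ hΔ1 hΔm hΔB]

lemma M1 (z w : H) (u : H ⊗[ℚ] H) :
    TensorProduct.map (glH z) gammaH (((Bplus w) ⊗ₜ (1 : H)) * u)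
      = ((Bplus (glH z w)) ⊗ₜ (1 : H)) * LinearMap.lTensor H gammaH u := by
  induction u using TensorProduct.induction_on with
  | zero => simp
  | tmul a b =>
    rw [Algebra.TensorProduct.tmul_mul_tmul, one_mul, TensorProduct.map_tmul,
      LinearMap.lTensor_tmul, Algebra.TensorProduct.tmul_mul_tmul, one_mul,
      glH_Bplus_mul]
  | add u v hu hv => rw [mul_add, map_add, hu, hv, map_add, mul_add]

lemma M2 (z : H) (U : H ⊗[ℚ] H) (v : H) :
    TensorProduct.map (glH z) gammaH ((LinearMap.lTensor H Bplus U) * ((1 : H) ⊗ₜ v))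
      = (glH z (CE U)) ⊗ₜ v := by
  induction U using TensorProduct.induction_on with
  | zero => simp
  | tmul a b =>
    rw [LinearMap.lTensor_tmul, Algebra.TensorProduct.tmul_mul_tmul, mul_one,
      TensorProduct.map_tmul, gammaH_mul, gammaH_Bplus, εH_Bplus, zero_smul, add_zero,
      smul_mul_assoc, one_mul, CE_tmul, map_smul, TensorProduct.tmul_smul,
      TensorProduct.smul_tmul']
  | add u w hu hw =>
    rw [map_add, add_mul, map_add, hu, hw, map_add, map_add, TensorProduct.add_tmul]

include hΔ1 hΔm hΔB in
lemma lemL (z y : H) :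
    LinearMap.lTensor H gammaH (Δ (glH z y))
      = εH y • LinearMap.lTensor H gammaH (Δ z)
        + TensorProduct.map (glH z) gammaH (Δ y) := by
  induction y using MonoidAlgebra.induction_linear with
  | zero => simp
  | add f g hf hg =>
    simp only [map_add, add_smul, hf, hg]
    abel
  | single G c =>
    rw [single_eq_smul_bf]
    simp only [map_smul, smul_eq_mul]
    rw [mul_smul, ← smul_add]
    congr 1
    rcases G with _ | ⟨⟨c₀⟩, rest⟩
    · rw [bf_one, glH_one, hΔ1, εH_one, one_smul,
        show TensorProduct.map (glH z) gammaH ((1 : H) ⊗ₜ[ℚ] (1 : H))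
            = glH z 1 ⊗ₜ gammaH 1 from TensorProduct.map_tmul _ _ _ _,
        gammaH_one, TensorProduct.tmul_zero, add_zero]
    · rw [bf_cons_eq, glH_Bplus_mul, L1 Δ hΔ1 hΔm hΔB, ΔBm Δ hΔm hΔB, map_add,
        M1, M2, counit Δ hΔ1 hΔm hΔB, εH_mul, εH_Bplus, zero_mul, zero_smul, zero_add]

end DeltaLemmas

lemma Δd_bf (F : Forest) :
    Δd (bf F) = ∑ k ∈ Finset.range (F.length + 1), bf (F.take k) ⊗ₜ[ℚ] bf (F.drop k) :=
  lift_bf _ F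

lemma εH_apply (w : H) : w.coeff (1 : Forest) = εH w := rfl


/-- The deconcatenation coproduct `Δ_↗` is dual to the product `↗` under the pairing
`⟨−,−⟩` of the infinitesimal Hopf algebra `H` (characterized by `⟨1,x⟩ = ε(x)`,
`⟨xy,z⟩ = ⟨y⊗x,Δ(z)⟩`, `⟨B⁺(x),y⟩ = ⟨x,γ(y)⟩`):
`⟨Δ_↗(x), y⊗z⟩ = ⟨x, z ↗ y⟩` for all `x, y, z`; in particular every planar tree is
primitive for `Δ_↗`. -/
theorem deconcatenation_dual_to_graftLeaf (Δ : H →ₗ[ℚ] H ⊗[ℚ] H)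
    (hΔ1 : Δ 1 = 1 ⊗ₜ 1)
    (hΔm : ∀ x y : H, Δ (x * y) = (x ⊗ₜ (1 : H)) * Δ y + Δ x * ((1 : H) ⊗ₜ y) - x ⊗ₜ y)
    (hΔB : ∀ x : H, Δ (Bplus x) = (Bplus x) ⊗ₜ 1 + (LinearMap.lTensor H Bplus) (Δ x))
    (p : H →ₗ[ℚ] H →ₗ[ℚ] ℚ)
    (hp1 : ∀ x : H, p 1 x = x.coeff (1 : Forest))
    (hpm : ∀ x y z : H,
      p (x * y) z = TensorProduct.lift ((p y).smulRight (p x)) (Δ z))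
    (hpB : ∀ x y : H, p (Bplus x) y = p x (gammaH y)) :
    (∀ x y z : H,
      TensorProduct.lift ((p.flip y).smulRight (p.flip z)) (Δd x) = p x (glH z y)) ∧
    (∀ t : PTree, Δd (bf [t]) = bf [t] ⊗ₜ 1 + 1 ⊗ₜ bf [t]) := by
  constructor
  · -- Part 1
    -- P1 : pairing against a cons forest
    have P1 : ∀ (C A : Forest) (w : H),
        p (bf (PTree.node C :: A)) w
          = TensorProduct.lift ((p (bf A)).smulRight (p (bf C)))
              (LinearMap.lTensor H gammaH (Δ w)) := by
      intro C A w
      rw [bf_cons_eq, hpm]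
      have hmap : TensorProduct.lift ((p (bf A)).smulRight (p (Bplus (bf C))))
          = (TensorProduct.lift ((p (bf A)).smulRight (p (bf C)))).comp
              (LinearMap.lTensor H gammaH) := by
        apply TensorProduct.ext'
        intro a b
        simp only [TensorProduct.lift.tmul, LinearMap.smulRight_apply, LinearMap.smul_apply,
          LinearMap.coe_comp, Function.comp_apply, LinearMap.lTensor_tmul, smul_eq_mul, hpB]
      rw [hmap]; rfl
    have expand : ∀ (F0 : Forest) (a z : H),
        TensorProduct.lift ((p.flip a).smulRight (p.flip z)) (Δd (bf F0))
          = ∑ k ∈ Finset.range (F0.length + 1),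
              p (bf (F0.take k)) a * p (bf (F0.drop k)) z := by
      intro F0 a z
      rw [Δd_bf, map_sum]
      refine Finset.sum_congr rfl fun k _ => ?_
      simp only [TensorProduct.lift.tmul, LinearMap.smulRight_apply, LinearMap.smul_apply,
        LinearMap.flip_apply, smul_eq_mul]
    have key : ∀ (F : Forest) (y z : H),
        TensorProduct.lift ((p.flip y).smulRight (p.flip z)) (Δd (bf F))
          = p (bf F) (glH z y) := by
      intro F
      induction F with
      | nil =>
        intro y z
        rw [expand]
        simp only [List.length_nil, zero_add, Finset.sum_range_one, List.take_nil,
          List.drop_nil]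
        rw [bf_one, hp1, hp1, hp1, εH_apply, εH_apply, εH_apply, εH_glH]
        ring
      | cons t F' ih =>
        obtain ⟨C⟩ := t
        intro y z
        rw [expand]
        rw [show (PTree.node C :: F').length + 1 = (F'.length + 1) + 1 from rfl,
          Finset.sum_range_succ']
        simp only [List.take_succ_cons, List.drop_succ_cons, List.take_zero, List.drop_zero]
        -- rewrite the shifted terms using P1
        have step1 : ∀ j, p (bf (PTree.node C :: F'.take j)) y * p (bf (F'.drop j)) z
            = TensorProduct.lift ((p (bf (F'.take j))).smulRight (p (bf C)))
                (LinearMap.lTensor H gammaH (Δ y)) * p (bf (F'.drop j)) z := by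
          intro j; rw [P1]
        simp only [step1]
        -- the summed linear identity
        have SUM : ∀ u : H ⊗[ℚ] H,
            ∑ j ∈ Finset.range (F'.length + 1),
              TensorProduct.lift ((p (bf (F'.take j))).smulRight (p (bf C))) u
                * p (bf (F'.drop j)) z
            = TensorProduct.lift (((p (bf F')).comp (glH z)).smulRight (p (bf C))) u := by
          intro u
          induction u using TensorProduct.induction_on with
          | zero => simp
          | tmul a b =>
            simp only [TensorProduct.lift.tmul, LinearMap.smulRight_apply,
              LinearMap.smul_apply, smul_eq_mul, LinearMap.coe_comp, Function.comp_apply]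
            rw [← ih a z, expand, Finset.sum_mul]
            refine Finset.sum_congr rfl fun j _ => ?_
            ring
          | add u v hu hv =>
            simp only [map_add, add_mul, Finset.sum_add_distrib, hu, hv]
        rw [SUM]
        -- relate Λ ∘ (id ⊗ γ) with Θ ∘ (glH z ⊗ γ)
        have comp : ∀ u : H ⊗[ℚ] H,
            TensorProduct.lift (((p (bf F')).comp (glH z)).smulRight (p (bf C)))
              (LinearMap.lTensor H gammaH u)
            = TensorProduct.lift ((p (bf F')).smulRight (p (bf C)))
                (TensorProduct.map (glH z) gammaH u) := by
          intro u
          induction u using TensorProduct.induction_on with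
          | zero => simp
          | tmul a b =>
            simp only [LinearMap.lTensor_tmul, TensorProduct.map_tmul,
              TensorProduct.lift.tmul, LinearMap.smulRight_apply, LinearMap.coe_comp,
              Function.comp_apply]
          | add u v hu hv => simp only [map_add, hu, hv]
        rw [comp]
        have hL := lemL Δ hΔ1 hΔm hΔB z y
        have hmapγ : TensorProduct.map (glH z) gammaH (Δ y)
            = LinearMap.lTensor H gammaH (Δ (glH z y))
              - εH y • LinearMap.lTensor H gammaH (Δ z) := by
          rw [hL]; abel
        rw [hmapγ, map_sub, map_smul, ← P1, ← P1]
        rw [bf_one, hp1, εH_apply]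
        simp only [smul_eq_mul]
        ring
    intro x y z
    induction x using MonoidAlgebra.induction_linear with
    | zero => simp
    | add f g hf hg => simp [map_add, hf, hg]
    | single F c =>
      rw [single_eq_smul_bf]
      simp only [map_smul, LinearMap.smul_apply, smul_eq_mul]
      rw [key F y z]
  · -- Part 2
    intro t
    rw [Δd_bf]
    simp only [List.length_singleton]
    rw [Finset.sum_range_succ, Finset.sum_range_one]
    simp only [List.take_zero, List.drop_zero, List.take_succ_cons, List.take_nil,
      List.drop_succ_cons, List.drop_nil]
    rw [bf_one, add_comm]
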